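/- arXiv:2410.23038 — 2 statements merged into one kernel-verified Lean document; each statement's English description precedes it below -/
import Mathlib

section
/- Suppose W : ℝ → ℝ is continuous with occupation measure μ_{[0;T]} absolutely continuous with density L ∈ L^∞, and suppose the linear Strichartz estimate ‖e^{-z𝓛}u_0‖_{L^p_z([a;b];X)} ≤ C(b−a)‖u_0‖_{L^2} holds for all intervals [a;b]. Then with I_W(T) = [W_0 − 2‖W‖_{L^∞([0;T])}; W_0 + 2‖W‖_{L^∞([0;T])}], one has ‖e^{-(W_t−W_0)𝓛}u_0‖_{L^p_t([0;T];X)}^p ≤ ‖L‖_{L^∞} · C(|I_W(T)|)^p · ‖u_0‖_{L^2}^p. -/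
open MeasureTheory Set
open scoped ENNReal

/-- Transfer of Strichartz estimates to the modulated evolution: if the occupation measure of
`W` on `[0;T]` has density `L` bounded by `K`, and the linear space-time estimate
`‖f‖_{L^p([a;b];X)} ≤ C(b-a) M` holds on every interval, then with
`I_W(T) = [W 0 - 2‖W‖_∞ ; W 0 + 2‖W‖_∞]` (of length `4‖W‖_∞`) one has
`∫_0^T ‖f (W t)‖^p dt ≤ ‖L‖_∞ C(|I_W(T)|)^p M^p`. -/
theorem stmt3 {X : Type*} [NormedAddCommGroup X]
    (f : ℝ → X) (W : ℝ → ℝ) (T : ℝ) (hT : 0 < T)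
    (p : ℝ) (hp : 1 ≤ p)
    (L : ℝ → ℝ≥0∞) (K : ℝ≥0∞) (hLK : ∀ z, L z ≤ K)
    (C : ℝ → ℝ) (hC : Monotone C) (M Wnorm : ℝ) (hWnorm : 0 ≤ Wnorm)
    (hWbd : ∀ t ∈ Icc (0 : ℝ) T, |W t| ≤ Wnorm)
    (hocc : ∀ g : ℝ → ℝ≥0∞, Measurable g →
      ∫⁻ t in Icc (0 : ℝ) T, g (W t) = ∫⁻ z, g z * L z)
    (hmeas : Measurable fun z => ENNReal.ofReal (‖f z‖ ^ p))
    (hStr : ∀ a b : ℝ, a ≤ b →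
      ∫⁻ z in Icc a b, ENNReal.ofReal (‖f z‖ ^ p) ≤
        ENNReal.ofReal ((C (b - a)) ^ p * M ^ p)) :
    ∫⁻ t in Icc (0 : ℝ) T, ENNReal.ofReal (‖f (W t)‖ ^ p) ≤
      K * ENNReal.ofReal ((C (4 * Wnorm)) ^ p * M ^ p) := by
  set a : ℝ := W 0 - 2 * Wnorm with ha
  set b : ℝ := W 0 + 2 * Wnorm with hb
  have hW0 : |W 0| ≤ Wnorm := hWbd 0 ⟨le_rfl, hT.le⟩
  set g : ℝ → ℝ≥0∞ := (Icc a b).indicator (fun z => ENNReal.ofReal (‖f z‖ ^ p)) with hg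
  have hgmeas : Measurable g := hmeas.indicator measurableSet_Icc
  have hmem : ∀ t ∈ Icc (0 : ℝ) T, W t ∈ Icc a b := by
    intro t ht
    have h := hWbd t ht
    rw [abs_le] at h hW0
    constructor <;> simp only [ha, hb] <;> linarith [h.1, h.2, hW0.1, hW0.2]
  have hstep1 : ∫⁻ t in Icc (0 : ℝ) T, ENNReal.ofReal (‖f (W t)‖ ^ p)
      = ∫⁻ t in Icc (0 : ℝ) T, g (W t) := by
    refine setLIntegral_congr_fun measurableSet_Icc ?_
    intro t ht; beta_reduce
    rw [hg, indicator_of_mem (hmem t ht)]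
  rw [hstep1, hocc g hgmeas]
  have hstep2 : ∫⁻ z, g z * L z ≤ ∫⁻ z, g z * K :=
    lintegral_mono fun z => mul_le_mul_right (hLK z) _
  refine hstep2.trans ?_
  rw [lintegral_mul_const _ hgmeas, mul_comm]
  have hind : ∫⁻ z, g z = ∫⁻ z in Icc a b, ENNReal.ofReal (‖f z‖ ^ p) := by
    rw [hg]; exact lintegral_indicator measurableSet_Icc _
  rw [hind]
  have hab : a ≤ b := by simp only [ha, hb]; linarith
  refine mul_le_mul_right ((hStr a b hab).trans_eq ?_) K
  congr 2
  simp only [ha, hb]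
  ring
end

section
/- Strip localization of the resonance: let n_ℓ ∈ ℤ^d with |n_ℓ| ∼ N_1, let M ≥ 1, and suppose n_0 lies in the cube n_ℓ + [−N_2; N_2]^d and in the strip R_α = {n : n·n_ℓ ∈ [α|n_ℓ|M; (α+1)|n_ℓ|M)} with N_2^2 ≤ |α| M^2 and |α| ∼ M^{−1}N_1. Then |n_0|^2 = α^2 M^2 + O(|α| M^2), i.e. there is an absolute constant C with | |n_0|^2 − α^2 M^2 | ≤ C |α| M^2. -/
open scoped RealInnerProductSpace

set_option maxHeartbeats 1000000 in
/-- Strip localization of the resonance: if `n₀` lies in the cube `nℓ + [-N₂;N₂]^d` and in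
the strip `{n : n·nℓ ∈ [α|nℓ|M; (α+1)|nℓ|M)}`, with `N₂² ≤ |α| M²` and `M ≥ 1`, then
`| |n₀|² - α²M² | ≤ C |α| M²`. -/
theorem stmt13 (d : ℕ) : ∃ C > (0 : ℝ),
    ∀ (n₀ nℓ : EuclideanSpace ℝ (Fin d)) (M N₂ : ℝ) (α : ℤ),
      1 ≤ M → 0 ≤ N₂ → nℓ ≠ 0 → α ≠ 0 →
      (∀ i, |n₀ i - nℓ i| ≤ N₂) →
      N₂ ^ 2 ≤ |(α : ℝ)| * M ^ 2 →
      (α : ℝ) * ‖nℓ‖ * M ≤ ⟪n₀, nℓ⟫ →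
      ⟪n₀, nℓ⟫ < ((α : ℝ) + 1) * ‖nℓ‖ * M →
      |‖n₀‖ ^ 2 - (α : ℝ) ^ 2 * M ^ 2| ≤ C * |(α : ℝ)| * M ^ 2 := by
  refine ⟨d + 3, by positivity, ?_⟩
  intro n₀ nℓ M N₂ α hM hN₂ hnℓ hα hcube hN2sq hlo hhi
  have hL : (0:ℝ) < ‖nℓ‖ := norm_pos_iff.mpr hnℓ
  have hL2 : (0:ℝ) < ‖nℓ‖ ^ 2 := by positivity
  set L : ℝ := ‖nℓ‖ with hLdef
  set A : ℝ := (α : ℝ) with hAdef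
  set t : ℝ := ⟪n₀, nℓ⟫ with htdef
  have hα1 : (1:ℝ) ≤ |A| := by
    rw [hAdef, ← Int.cast_abs]
    exact_mod_cast Int.one_le_abs hα
  have hM0 : (0:ℝ) < M := lt_of_lt_of_le one_pos hM
  -- cube condition
  have h1 : ‖n₀ - nℓ‖ ^ 2 ≤ (d : ℝ) * N₂ ^ 2 := by
    rw [PiLp.norm_sq_eq_of_L2]
    calc ∑ i, ‖(n₀ - nℓ) i‖ ^ 2 ≤ ∑ _i : Fin d, N₂ ^ 2 := by
          refine Finset.sum_le_sum fun i _ => ?_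
          have := hcube i
          have h2 : ‖(n₀ - nℓ) i‖ = |n₀ i - nℓ i| := by
            simp [Real.norm_eq_abs]
          rw [h2]
          nlinarith [abs_nonneg (n₀ i - nℓ i)]
      _ = (d : ℝ) * N₂ ^ 2 := by simp [mul_comm]
  have h1' : ‖n₀ - nℓ‖ ^ 2 ≤ (d : ℝ) * (|A| * M ^ 2) := by
    refine h1.trans ?_
    have : (0:ℝ) ≤ (d:ℝ) := Nat.cast_nonneg d
    nlinarith
  -- Cauchy-Schwarz
  have hcs : t ^ 2 ≤ ‖n₀‖ ^ 2 * L ^ 2 := by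
    have h := abs_real_inner_le_norm n₀ nℓ
    have h2 : t ^ 2 = |t| ^ 2 := (sq_abs t).symm
    rw [h2]
    have : |t| ≤ ‖n₀‖ * L := h
    nlinarith [abs_nonneg t, norm_nonneg n₀]
  -- expansion
  have hexp : ‖n₀ - nℓ‖ ^ 2 = ‖n₀‖ ^ 2 - 2 * t + L ^ 2 := by
    rw [htdef, hLdef, norm_sub_sq_real]
  -- strip bounds on u = t - A*L*M
  have hu : 0 ≤ t - A * L * M := by linarith
  have hu' : t - A * L * M ≤ L * M := by nlinarith
  -- bounds on t²
  have hALMu1 : A * (L * M * (t - A * L * M)) ≤ |A| * (L * M * (t - A * L * M)) :=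
    mul_le_mul_of_nonneg_right (le_abs_self A) (by positivity)
  have hALMu2 : -(|A| * (L * M * (t - A * L * M))) ≤ A * (L * M * (t - A * L * M)) := by
    have := mul_le_mul_of_nonneg_right (neg_abs_le A) (mul_nonneg (by positivity : (0:ℝ) ≤ L * M) hu)
    linarith
  have huu : (t - A * L * M) * (t - A * L * M) ≤ (L * M) * (L * M) :=
    mul_self_le_mul_self hu hu'
  have hALM2 : |A| * (L * M * (t - A * L * M)) ≤ |A| * (L * M * (L * M)) := by
    refine mul_le_mul_of_nonneg_left ?_ (abs_nonneg A)
    exact mul_le_mul_of_nonneg_left hu' (by positivity)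
  have ht2hi : t ^ 2 ≤ L ^ 2 * (A ^ 2 * M ^ 2 + 3 * |A| * M ^ 2) := by
    nlinarith [sq_nonneg L, sq_nonneg M]
  have ht2lo : L ^ 2 * (A ^ 2 * M ^ 2 - 2 * |A| * M ^ 2) ≤ t ^ 2 := by
    nlinarith [mul_nonneg hu hu, abs_nonneg A]
  -- upper bound on ‖n₀‖² * L²
  have hupkey : ‖n₀‖ ^ 2 * L ^ 2 ≤ ‖n₀ - nℓ‖ ^ 2 * L ^ 2 + t ^ 2 := by
    nlinarith [sq_nonneg (t - L ^ 2)]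
  have hup : ‖n₀‖ ^ 2 ≤ A ^ 2 * M ^ 2 + ((d:ℝ) + 3) * |A| * M ^ 2 := by
    have key : ‖n₀‖ ^ 2 * L ^ 2 ≤ (A ^ 2 * M ^ 2 + ((d:ℝ) + 3) * |A| * M ^ 2) * L ^ 2 := by
      nlinarith [mul_le_mul_of_nonneg_right h1' hL2.le]
    exact le_of_mul_le_mul_right key hL2
  have hlo' : A ^ 2 * M ^ 2 - ((d:ℝ) + 3) * |A| * M ^ 2 ≤ ‖n₀‖ ^ 2 := by
    have key : (A ^ 2 * M ^ 2 - ((d:ℝ) + 3) * |A| * M ^ 2) * L ^ 2 ≤ ‖n₀‖ ^ 2 * L ^ 2 := by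
      have hd : (0:ℝ) ≤ (d:ℝ) := Nat.cast_nonneg d
      nlinarith [mul_nonneg (mul_nonneg (mul_nonneg hd (abs_nonneg A)) (sq_nonneg M)) hL2.le]
    exact le_of_mul_le_mul_right key hL2
  rw [abs_le]
  constructor <;> linarith
end
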